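/- For every odd natural number n, the function X^(n) satisfies the bound |X^(n)(x)| ≤ M^{(n-1)/2} x^n ≤ M^{(n-1)/2} a^n for all x ∈ [0,a], where M = max_{x∈[0,a]} |q(x)|. -/

import Mathlib

open MeasureTheory Set Filter

/-- The sequence X̃^(n): X̃^(0) ≡ 1; for n ≥ 1, X̃^(n)(x) = n ∫₀ˣ X̃^(n-1)(ξ) dξ
if n is even, and X̃^(n)(x) = n ∫₀ˣ X̃^(n-1)(ξ) q(ξ) dξ if n is odd. -/
noncomputable def Xtilde (q : ℝ → ℂ) : ℕ → ℝ → ℂ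
  | 0 => fun _ => 1
  | n + 1 => fun x => ((n + 1 : ℕ) : ℂ) *
      ∫ ξ in (0:ℝ)..x, Xtilde q n ξ * (if Even (n + 1) then 1 else q ξ)

/-- The sequence X^(n): X^(0) ≡ 1; for n ≥ 1, X^(n)(x) = n ∫₀ˣ X^(n-1)(ξ) q(ξ) dξ
if n is even, and X^(n)(x) = n ∫₀ˣ X^(n-1)(ξ) dξ if n is odd. -/
noncomputable def Xup (q : ℝ → ℂ) : ℕ → ℝ → ℂ
  | 0 => fun _ => 1
  | n + 1 => fun x => ((n + 1 : ℕ) : ℂ) *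
      ∫ ξ in (0:ℝ)..x, Xup q n ξ * (if Even (n + 1) then q ξ else 1)

lemma xup_bound (a : ℝ) (ha : 0 < a) (q : ℝ → ℂ) (hq : ContinuousOn q (Set.Icc 0 a))
    (M : ℝ) (hM0 : 0 ≤ M) (hMb : ∀ x ∈ Set.Icc 0 a, ‖q x‖ ≤ M) (n : ℕ) :
    ContinuousOn (Xup q n) (Set.Icc 0 a) ∧
      ∀ x ∈ Set.Icc 0 a, ‖Xup q n x‖ ≤ M ^ (n / 2) * x ^ n := by
  induction n with
  | zero =>
    refine ⟨continuousOn_const, fun x hx => ?_⟩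
    simp [Xup]
  | succ n ih =>
    obtain ⟨ihc, ihb⟩ := ih
    set c : ℝ → ℂ := fun ξ => if Even (n+1) then q ξ else 1 with hc
    set C : ℝ := if Even (n+1) then M else 1 with hC
    have hC0 : 0 ≤ C := by by_cases h : Even (n+1) <;> simp [hC, h, hM0]
    have hcont : ContinuousOn (fun ξ => Xup q n ξ * c ξ) (Set.Icc 0 a) := by
      by_cases h : Even (n+1)
      · simp only [hc, h, ↓reduceIte]
        exact ihc.mul hq
      · simpa [hc, h] using ihc
    have hMC : M ^ (n / 2) * C = M ^ ((n+1) / 2) := by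
      by_cases h : Even (n+1)
      · obtain ⟨m, hm⟩ := h
        have h1 : n / 2 = m - 1 := by omega
        have h2 : (n+1) / 2 = m := by omega
        have hm1 : 1 ≤ m := by omega
        rw [hC, if_pos ⟨m, hm⟩, h1, h2, ← pow_succ]
        congr 1
        omega
      · have h2 : (n+1) / 2 = n / 2 := by
          rcases Nat.even_or_odd n with he | ho
          · obtain ⟨m, hm⟩ := he; omega
          · exact absurd (by obtain ⟨m, hm⟩ := ho; exact ⟨m+1, by omega⟩) h
        simp [hC, h, h2]
    refine ⟨?_, ?_⟩
    · have hint : IntegrableOn (fun ξ => Xup q n ξ * c ξ) (Set.uIcc 0 a) := by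
        rw [Set.uIcc_of_le ha.le]
        exact hcont.integrableOn_Icc
      have := intervalIntegral.continuousOn_primitive_interval' (b₁ := 0) (b₂ := a)
        (hint.intervalIntegrable) (Set.left_mem_uIcc)
      rw [Set.uIcc_of_le ha.le] at this
      show ContinuousOn (fun x => ((n + 1 : ℕ) : ℂ) *
        ∫ ξ in (0:ℝ)..x, Xup q n ξ * c ξ) (Set.Icc 0 a)
      exact continuousOn_const.mul this
    · intro x hx
      obtain ⟨hx0, hxa⟩ := hx
      have hsub : Set.Icc 0 x ⊆ Set.Icc 0 a := Set.Icc_subset_Icc le_rfl hxa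
      have hcont' : ContinuousOn (fun ξ => Xup q n ξ * c ξ) (Set.Icc 0 x) :=
        hcont.mono hsub
      have hint : IntervalIntegrable (fun ξ => Xup q n ξ * c ξ) volume 0 x := by
        apply ContinuousOn.intervalIntegrable
        rwa [Set.uIcc_of_le hx0]
      have hptw : ∀ ξ ∈ Set.Icc 0 x, ‖Xup q n ξ * c ξ‖ ≤ (M ^ (n/2) * C) * ξ ^ n := by
        intro ξ hξ
        have hξa := hsub hξ
        have h1 : ‖Xup q n ξ‖ ≤ M ^ (n/2) * ξ ^ n := ihb ξ hξa
        have h2 : ‖c ξ‖ ≤ C := by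
          by_cases h : Even (n+1) <;> simp [hc, hC, h]
          exact hMb ξ hξa
        calc ‖Xup q n ξ * c ξ‖ = ‖Xup q n ξ‖ * ‖c ξ‖ := norm_mul _ _
          _ ≤ (M ^ (n/2) * ξ ^ n) * C :=
              mul_le_mul h1 h2 (norm_nonneg _) (mul_nonneg (pow_nonneg hM0 _) (pow_nonneg hξ.1 _))
          _ = (M ^ (n/2) * C) * ξ ^ n := by ring
      have hgint : IntervalIntegrable (fun ξ => (M ^ (n/2) * C) * ξ ^ n) volume 0 x :=
        (continuous_const.mul (continuous_pow n)).intervalIntegrable 0 x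
      have hbd : ‖∫ ξ in (0:ℝ)..x, Xup q n ξ * c ξ‖
          ≤ ∫ ξ in (0:ℝ)..x, (M ^ (n/2) * C) * ξ ^ n := by
        calc ‖∫ ξ in (0:ℝ)..x, Xup q n ξ * c ξ‖
            ≤ ∫ ξ in (0:ℝ)..x, ‖Xup q n ξ * c ξ‖ :=
              intervalIntegral.norm_integral_le_integral_norm hx0
          _ ≤ ∫ ξ in (0:ℝ)..x, (M ^ (n/2) * C) * ξ ^ n := by
              apply intervalIntegral.integral_mono_on hx0 hint.norm hgint
              intro ξ hξ; exact hptw ξ hξ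
      have hval : (∫ ξ in (0:ℝ)..x, (M ^ (n/2) * C) * ξ ^ n)
          = (M ^ (n/2) * C) * (x ^ (n+1) / (n+1)) := by
        rw [intervalIntegral.integral_const_mul, integral_pow]
        ring
      show ‖((n + 1 : ℕ) : ℂ) * ∫ ξ in (0:ℝ)..x, Xup q n ξ * c ξ‖
        ≤ M ^ ((n+1) / 2) * x ^ (n+1)
      rw [norm_mul, Complex.norm_natCast]
      calc ((n+1 : ℕ) : ℝ) * ‖∫ ξ in (0:ℝ)..x, Xup q n ξ * c ξ‖
          ≤ ((n+1 : ℕ) : ℝ) * ((M ^ (n/2) * C) * (x ^ (n+1) / (n+1))) := by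
            rw [← hval]
            exact mul_le_mul_of_nonneg_left hbd (by positivity)
        _ = (M ^ (n/2) * C) * x ^ (n+1) := by
            field_simp
            push_cast; ring
        _ = M ^ ((n+1) / 2) * x ^ (n+1) := by rw [hMC]

/-- For every odd natural number n, the function X^(n) satisfies
|X^(n)(x)| ≤ M^{(n-1)/2} x^n ≤ M^{(n-1)/2} a^n for all x ∈ [0,a], where
M = max_{x∈[0,a]} |q(x)|. -/
theorem stmt_1 (a : ℝ) (ha : 0 < a) (q : ℝ → ℂ) (hq : ContinuousOn q (Set.Icc 0 a))
    (M : ℝ) (hM : IsGreatest ((fun x => ‖q x‖) '' Set.Icc 0 a) M)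
    (n : ℕ) (hn : Odd n) :
    ∀ x ∈ Set.Icc 0 a,
      ‖Xup q n x‖ ≤ M ^ ((n - 1) / 2) * x ^ n ∧
      M ^ ((n - 1) / 2) * x ^ n ≤ M ^ ((n - 1) / 2) * a ^ n := by
  obtain ⟨⟨x₀, hx₀, hx₀M⟩, hub⟩ := hM
  have hM0 : 0 ≤ M := hx₀M ▸ norm_nonneg _
  have hMb : ∀ x ∈ Set.Icc 0 a, ‖q x‖ ≤ M := fun x hx => hub ⟨x, hx, rfl⟩
  have key := (xup_bound a ha q hq M hM0 hMb n).2
  have hdiv : (n - 1) / 2 = n / 2 := by obtain ⟨m, hm⟩ := hn; omega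
  intro x hx
  rw [hdiv]
  refine ⟨key x hx, ?_⟩
  exact mul_le_mul_of_nonneg_left (pow_le_pow_left₀ hx.1 hx.2 n) (by positivity)
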